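/- Let (M, dist) be a metric space and a ∈ (0,1). Then for all x, y, z ∈ M, F_{a;x,y}(z) ≥ max( (dist(x,z) − a·dist(x,y))², (dist(z,y) − (1−a)·dist(x,y))² ). -/
import Mathlib

/-- Two-sided version of Lemma 3.1: the three distances function dominates the
maximum of the two squared defects. -/
theorem three_distances_lower_bound_two_sided {M : Type*} [MetricSpace M]
    (a : ℝ) (ha : a ∈ Set.Ioo (0:ℝ) 1) (x y z : M) :
    (1 - a) * dist x z ^ 2 + a * dist z y ^ 2 - a * (1 - a) * dist x y ^ 2
      ≥ max ((dist x z - a * dist x y) ^ 2)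
            ((dist z y - (1 - a) * dist x y) ^ 2) := by
  obtain ⟨ha0, ha1⟩ := ha
  have h1 : dist x y ≤ dist x z + dist z y := dist_triangle x z y
  have h2 : dist x z ≤ dist x y + dist z y := by
    have := dist_triangle x y z; rwa [dist_comm y z] at this
  have h3 : dist z y ≤ dist x z + dist x y := by
    have := dist_triangle z x y; rwa [dist_comm z x] at this
  rw [ge_iff_le, max_le_iff]
  constructor
  · nlinarith [mul_nonneg ha0.le (mul_nonneg (sub_nonneg.2 h1) (sub_nonneg.2 h2))]
  · nlinarith [mul_nonneg (sub_nonneg.2 ha1.le) (mul_nonneg (sub_nonneg.2 h1) (sub_nonneg.2 h3))]
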